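/- arXiv:1302.6183 — 8 statements merged into one kernel-verified Lean document; each statement's English description precedes it below -/
import Mathlib

section
/- A finite simple graph H on vertex set V is an exact-threshold graph if and only if H has a unit interval representation; that is, there exist integers r ≥ 1, t ≥ 0 and a map c : V → {1,...,r} ⊆ ℤ such that for all distinct u, v ∈ V, u and v are adjacent in H if and only if |c(u) − c(v)| ≤ t, precisely when there exists a map f : V → ℝ such that for all distinct u, v ∈ V, u and v are adjacent in H if and only if the closed intervals [f(u), f(u)+1] and [f(v), f(v)+1] have nonempty intersection. -/
lemma icc_nonempty_iff (a b : ℝ) :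
    (Set.Icc a (a + 1) ∩ Set.Icc b (b + 1)).Nonempty ↔ |a - b| ≤ 1 := by
  rw [Set.Icc_inter_Icc, Set.nonempty_Icc, abs_sub_le_iff]
  simp only [max_le_iff, le_min_iff]
  constructor
  · rintro ⟨⟨_, h1⟩, h2, _⟩
    constructor <;> linarith
  · rintro ⟨h1, h2⟩
    refine ⟨⟨by linarith, by linarith⟩, by linarith, by linarith⟩

lemma int_le_half (a b : ℤ) : (a : ℝ) ≤ (b : ℝ) + 1/2 ↔ a ≤ b := by
  constructor
  · intro h
    by_contra hc
    push_neg at hc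
    have : (b : ℝ) + 1 ≤ a := by exact_mod_cast hc
    linarith
  · intro h
    have : (a : ℝ) ≤ b := by exact_mod_cast h
    linarith

lemma floor_sub_close (a b : ℝ) : |((⌊a⌋ - ⌊b⌋ : ℤ) : ℝ) - (a - b)| < 1 := by
  rw [abs_lt]
  push_cast
  constructor <;>
    linarith [Int.floor_le a, Int.floor_le b, Int.sub_one_lt_floor a, Int.sub_one_lt_floor b]

/-- A finite simple graph `H` is an exact-threshold graph (there are integers `r ≥ 1`, `t ≥ 0`
and a coloring `c : V → {1,…,r} ⊆ ℤ` with `H.Adj u v ↔ |c u − c v| ≤ t` for distinct `u, v`)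
if and only if `H` has a unit interval representation. -/
theorem stmt1 {V : Type*} [Fintype V] (H : SimpleGraph V) :
    (∃ (r t : ℤ), 1 ≤ r ∧ 0 ≤ t ∧
      ∃ c : V → ℤ, (∀ v, 1 ≤ c v ∧ c v ≤ r) ∧
        ∀ u v : V, u ≠ v → (H.Adj u v ↔ |c u - c v| ≤ t)) ↔
    (∃ f : V → ℝ, ∀ u v : V, u ≠ v →
      (H.Adj u v ↔ (Set.Icc (f u) (f u + 1) ∩ Set.Icc (f v) (f v + 1)).Nonempty)) := by
  classical
  constructor
  · rintro ⟨r, t, hr, ht, c, hc, hadj⟩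
    have ht' : (0 : ℝ) ≤ t := by exact_mod_cast ht
    have htpos : (0 : ℝ) < (t : ℝ) + 1/2 := by linarith
    refine ⟨fun v => (c v : ℝ) / ((t : ℝ) + 1/2), fun u v huv => ?_⟩
    rw [icc_nonempty_iff, hadj u v huv, div_sub_div_same, abs_div,
      abs_of_pos htpos, div_le_one htpos]
    rw [show ((c u : ℝ) - (c v : ℝ)) = ((c u - c v : ℤ) : ℝ) by push_cast; ring,
      ← Int.cast_abs]
    exact (int_le_half _ _).symm
  · rintro ⟨f, hf⟩
    by_cases hV : Nonempty V
    · haveI := hV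
      have hadj : ∀ u v : V, u ≠ v → (H.Adj u v ↔ |f u - f v| ≤ 1) :=
        fun u v h => (hf u v h).trans (icc_nonempty_iff _ _)
      have hex : ∃ N : ℕ, 1 ≤ N ∧ ∀ u v : V, u ≠ v → ¬ H.Adj u v →
          (N : ℝ) + 2 ≤ (N : ℝ) * |f u - f v| := by
        obtain ⟨B, hB⟩ := ((Finset.univ ×ˢ Finset.univ).image
          (fun p : V × V => 2 / (|f p.1 - f p.2| - 1))).exists_le
        obtain ⟨n, hnB⟩ := exists_nat_ge B
        refine ⟨n + 1, Nat.le_add_left 1 n, fun u v huv hne => ?_⟩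
        have hd : 1 < |f u - f v| := by
          by_contra hle
          push_neg at hle
          exact hne ((hadj u v huv).2 hle)
        have h2 : 2 / (|f u - f v| - 1) ≤ B :=
          hB _ (Finset.mem_image.2 ⟨(u, v), by simp, rfl⟩)
        have h2' : 2 / (|f u - f v| - 1) ≤ ((n + 1 : ℕ) : ℝ) := by push_cast; linarith
        have hpos : (0 : ℝ) < |f u - f v| - 1 := by linarith
        rw [div_le_iff₀ hpos, mul_sub, mul_one] at h2'
        linarith
      obtain ⟨N, hN1, hNbig⟩ := hex
      set g : V → ℤ := fun v => ⌊(N : ℝ) * f v⌋ with hg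
      set m : ℤ := Finset.univ.inf' Finset.univ_nonempty g with hm
      set M : ℤ := Finset.univ.sup' Finset.univ_nonempty g with hM
      have hrange : ∀ v : V, m ≤ g v ∧ g v ≤ M := fun v =>
        ⟨Finset.inf'_le _ (Finset.mem_univ v), Finset.le_sup' _ (Finset.mem_univ v)⟩
      have hkey : ∀ u v : V, u ≠ v → (|f u - f v| ≤ 1 ↔ |g u - g v| ≤ (N : ℤ)) := by
        intro u v huv
        have hclose : |((g u - g v : ℤ) : ℝ) - ((N : ℝ) * f u - (N : ℝ) * f v)| < 1 := by
          simpa [hg] using floor_sub_close ((N : ℝ) * f u) ((N : ℝ) * f v)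
        have hNnn : (0 : ℝ) ≤ (N : ℝ) := Nat.cast_nonneg N
        have hmul : |(N : ℝ) * f u - (N : ℝ) * f v| = (N : ℝ) * |f u - f v| := by
          rw [← mul_sub, abs_mul, abs_of_nonneg hNnn]
        constructor
        · intro h
          have t1 : |((g u - g v : ℤ) : ℝ)| ≤
              |((g u - g v : ℤ) : ℝ) - ((N : ℝ) * f u - (N : ℝ) * f v)|
                + |(N : ℝ) * f u - (N : ℝ) * f v| := by
            simpa using abs_add_le (((g u - g v : ℤ) : ℝ) - ((N : ℝ) * f u - (N : ℝ) * f v))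
              ((N : ℝ) * f u - (N : ℝ) * f v)
          have h1 : |((g u - g v : ℤ) : ℝ)| < (N : ℝ) + 1 := by nlinarith [hmul, hclose]
          have h2 : |(g u - g v : ℤ)| < (N : ℤ) + 1 := by exact_mod_cast h1
          omega
        · intro h
          by_contra hc
          push_neg at hc
          have hne : ¬ H.Adj u v := fun ha => absurd ((hadj u v huv).1 ha) (not_le.2 hc)
          have hb := hNbig u v huv hne
          have h1 : (N : ℝ) + 1 < |((g u - g v : ℤ) : ℝ)| := by
            have := abs_sub_abs_le_abs_sub ((N : ℝ) * f u - (N : ℝ) * f v) ((g u - g v : ℤ) : ℝ)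
            rw [abs_sub_comm ((N : ℝ) * f u - (N : ℝ) * f v)] at this
            nlinarith [hmul, hclose]
          have h2 : (N : ℤ) + 1 < |(g u - g v : ℤ)| := by exact_mod_cast h1
          omega
      refine ⟨M - m + 1, (N : ℤ), ?_, by positivity, fun v => g v - m + 1, ?_, ?_⟩
      · obtain v := Classical.arbitrary V
        have := hrange v; omega
      · intro v
        show 1 ≤ g v - m + 1 ∧ g v - m + 1 ≤ M - m + 1
        have := hrange v; omega
      · intro u v huv
        rw [hadj u v huv, hkey u v huv]
        show _ ↔ |(g u - m + 1) - (g v - m + 1)| ≤ (N : ℤ)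
        rw [show (g u - m + 1) - (g v - m + 1) = g u - g v from by ring]
    · refine ⟨1, 0, le_refl 1, le_refl 0, fun _ => 1, fun v => (hV ⟨v⟩).elim,
        fun u _ _ => (hV ⟨u⟩).elim⟩
end

section
/- Let G be a finite tree (a connected acyclic simple graph) on vertex set V. Then for every spanning subgraph H of G there exists a coloring c : V → {0,1} such that for every edge {u,v} of G: {u,v} is an edge of H if and only if c(u) = c(v). Hence every tree is (2,0)-total-threshold-colorable. -/
open SimpleGraph Walk

/-- In an acyclic graph, the unique paths from `r` to two adjacent vertices `u`, `v`
differ exactly by the edge between them. -/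
lemma path_step {V : Type*} {G : SimpleGraph V} (hG : G.IsAcyclic)
    {r u v : V} (h : G.Adj u v) {p : G.Walk r u} {q : G.Walk r v}
    (hp : p.IsPath) (hq : q.IsPath) :
    q = p.concat h ∨ p = q.concat h.symm := by
  classical
  by_cases hv : v ∈ p.support
  · right
    have hq' : q = p.takeUntil v hv :=
      congrArg Subtype.val (hG.path_unique ⟨q, hq⟩ ⟨_, hp.takeUntil hv⟩)
    have hd : p.dropUntil v hv = Walk.cons h.symm Walk.nil :=
      congrArg Subtype.val (hG.path_unique ⟨_, hp.dropUntil hv⟩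
        ⟨Walk.cons h.symm Walk.nil, by simp [cons_isPath_iff, h.ne']⟩)
    have := p.take_spec hv
    rw [hd] at this
    rw [hq', Walk.concat_eq_append]; exact this.symm
  · left
    have : (p.concat h).IsPath := by
      rw [← isPath_reverse_iff, reverse_concat, cons_isPath_iff]
      exact ⟨hp.reverse, by simpa using hv⟩
    exact congrArg Subtype.val (hG.path_unique ⟨q, hq⟩ ⟨_, this⟩)

/-- Every finite tree `G` is `(2,0)`-total-threshold-colorable: for every spanning subgraph
`H ≤ G` there is a coloring `c : V → {0,1} ⊆ ℤ` such that an edge of `G` is an edge of `H`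
iff its endpoints receive equal colors. -/
theorem stmt4 {V : Type*} [Fintype V] (G : SimpleGraph V) (hG : G.IsTree)
    (H : SimpleGraph V) (hH : H ≤ G) :
    ∃ c : V → ℤ, (∀ v, c v = 0 ∨ c v = 1) ∧
      ∀ u v : V, G.Adj u v → (H.Adj u v ↔ c u = c v) := by
  classical
  have : Nonempty V := hG.1.nonempty
  let r := Classical.arbitrary V
  choose P hP _ using fun v => hG.existsUnique_path r v
  let cnt : ∀ {a b : V}, G.Walk a b → ℕ :=
    fun w => w.edges.countP (fun e => !decide (e ∈ H.edgeSet))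
  refine ⟨fun v => (cnt (P v) : ℤ) % 2, fun v => Int.emod_two_eq _, fun u v huv => ?_⟩
  have hmem : s(u,v) ∈ H.edgeSet ↔ H.Adj u v := H.mem_edgeSet
  rcases path_step hG.2 huv (hP u) (hP v) with e | e
  · have : cnt (P v) = cnt (P u) + (if s(u,v) ∈ H.edgeSet then 0 else 1) := by
      rw [e]; simp only [cnt, Walk.edges_concat, List.countP_append]
      by_cases hm : s(u,v) ∈ H.edgeSet <;> simp [List.countP_cons, hm]
    rw [← hmem]
    by_cases hm : s(u,v) ∈ H.edgeSet <;> simp [hm] at this ⊢ <;> omega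
  · have hmem' : s(v,u) ∈ H.edgeSet ↔ H.Adj u v := by
      rw [H.mem_edgeSet]; exact H.adj_comm v u
    have : cnt (P u) = cnt (P v) + (if s(v,u) ∈ H.edgeSet then 0 else 1) := by
      rw [e]; simp only [cnt, Walk.edges_concat, List.countP_append]
      by_cases hm : s(v,u) ∈ H.edgeSet <;> simp [List.countP_cons, hm]
    rw [← hmem']
    by_cases hm : s(v,u) ∈ H.edgeSet <;> simp [hm] at this ⊢ <;> omega
end

section
/- For every n ≥ 1, the fan graph Fₙ is (5,1)-total-threshold-colorable: for every spanning subgraph H of Fₙ there exists a coloring c : V(Fₙ) → {−2,−1,0,1,2} ⊆ ℤ such that for every edge {u,v} of Fₙ: {u,v} is an edge of H if and only if |c(u) − c(v)| ≤ 1. -/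
/-- The fan graph `Fₙ` on vertex set `{0,1,…,n}`: the apex `0` is adjacent to every other
vertex, and the vertices `1,…,n` form a path. -/
def fanGraph (n : ℕ) : SimpleGraph (Fin (n + 1)) where
  Adj u v := u ≠ v ∧ (u = 0 ∨ v = 0 ∨ u.val + 1 = v.val ∨ v.val + 1 = u.val)
  symm := by
    constructor
    intro u v h
    refine ⟨h.1.symm, ?_⟩
    rcases h.2 with h | h | h | h
    · exact Or.inr (Or.inl h)
    · exact Or.inl h
    · exact Or.inr (Or.inr (Or.inr h))
    · exact Or.inr (Or.inr (Or.inl h))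
  loopless := by
    constructor
    intro u h
    exact h.1 rfl

open Fin.NatCast in
open Classical in
/-- sign of vertex `k+1` along the path -/
noncomputable def fanTau (n : ℕ) (H : SimpleGraph (Fin (n + 1))) : ℕ → ℤ
  | 0 => 1
  | k + 1 => if H.Adj (↑(k + 1)) (↑(k + 2)) then fanTau n H k else -(fanTau n H k)

lemma fanTau_pm (n : ℕ) (H : SimpleGraph (Fin (n + 1))) (k : ℕ) :
    fanTau n H k = 1 ∨ fanTau n H k = -1 := by
  induction k with
  | zero => left; rfl
  | succ k ih =>
    rw [fanTau]
    split <;> rcases ih with h | h <;> simp [h]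

/-- For every `n ≥ 1`, the fan `Fₙ` is `(5,1)`-total-threshold-colorable: every spanning
subgraph `H ≤ Fₙ` admits a coloring with colors in `{−2,−1,0,1,2} ⊆ ℤ` such that an edge
of `Fₙ` is an edge of `H` iff its endpoints' colors differ by at most `1`. -/
theorem stmt6 (n : ℕ) (hn : 1 ≤ n) (H : SimpleGraph (Fin (n + 1))) (hH : H ≤ fanGraph n) :
    ∃ c : Fin (n + 1) → ℤ, (∀ v, -2 ≤ c v ∧ c v ≤ 2) ∧
      ∀ u v : Fin (n + 1), (fanGraph n).Adj u v → (H.Adj u v ↔ |c u - c v| ≤ 1) := by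
  classical
  set c : Fin (n + 1) → ℤ := fun v =>
    if v = 0 then 0 else fanTau n H (v.val - 1) * (if H.Adj 0 v then 1 else 2) with hc
  -- main lemma for a consecutive pair
  have key : ∀ u v : Fin (n + 1), u ≠ 0 → v ≠ 0 → u.val + 1 = v.val →
      (H.Adj u v ↔ |c u - c v| ≤ 1) := by
    intro u v hu hv huv
    obtain ⟨k, hk⟩ : ∃ k, u.val = k + 1 :=
      ⟨u.val - 1, (Nat.succ_pred_eq_of_pos (Fin.pos_of_ne_zero hu)).symm⟩
    have hv' : v.val = k + 2 := by omega
    open Fin.NatCast in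
    have hcu : ((k + 1 : ℕ) : Fin (n + 1)) = u := by
      rw [← hk]; exact Fin.cast_val_eq_self u
    open Fin.NatCast in
    have hcv : ((k + 2 : ℕ) : Fin (n + 1)) = v := by
      rw [← hv']; exact Fin.cast_val_eq_self v
    have htau : fanTau n H (k + 1)
        = if H.Adj u v then fanTau n H k else -(fanTau n H k) := by
      rw [fanTau, hcu, hcv]
    simp only [hc, if_neg hu, if_neg hv, hk, hv', Nat.add_sub_cancel,
      show k + 2 - 1 = k + 1 from rfl, htau]
    rcases fanTau_pm n H k with ht | ht <;>
      by_cases h1 : H.Adj 0 u <;> by_cases h2 : H.Adj 0 v <;>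
      by_cases hA : H.Adj u v <;>
      simp [hA, h1, h2, ht] <;> norm_num
  -- apex lemma
  have apex : ∀ v : Fin (n + 1), v ≠ 0 → (H.Adj 0 v ↔ |c 0 - c v| ≤ 1) := by
    intro v hv
    simp only [hc, if_pos rfl, if_neg hv]
    rcases fanTau_pm n H (v.val - 1) with ht | ht <;>
      by_cases h2 : H.Adj 0 v <;> simp [h2, ht] <;> norm_num
  refine ⟨c, ?_, ?_⟩
  · intro v
    by_cases hv : v = 0
    · simp [hc, hv]
    · simp only [hc, if_neg hv]
      rcases fanTau_pm n H (v.val - 1) with ht | ht <;>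
        by_cases h2 : H.Adj 0 v <;> simp [h2, ht] <;> norm_num
  · intro u v hadj
    by_cases hu : u = 0
    · subst hu
      have hv : v ≠ 0 := fun h => hadj.1 h.symm
      exact apex v hv
    · by_cases hv : v = 0
      · subst hv
        rw [H.adj_comm, abs_sub_comm]
        exact apex u hu
      · rcases hadj.2 with h | h | h | h
        · exact absurd h hu
        · exact absurd h hv
        · exact key u v hu hv h
        · rw [H.adj_comm, abs_sub_comm]
          exact key v u hv hu h
end

section
/- For every integer t ≥ 0 there do not exist functions v, u : {0,1,2} → ℤ such that |v(i) − v(j)| > t for all i ≠ j and |u(i) − v(j)| ≤ t for all i ≠ j. (Hence the 6-vertex graph with vertices v₀,v₁,v₂,u₀,u₁,u₂, where each uᵢ is adjacent to v_{i+1} and v_{i+2} (indices mod 3) and the vᵢ are pairwise adjacent, with the edges among the vᵢ labeled far and all other edges labeled near, admits no threshold-coloring; this graph occurs in the triangular grid, so the triangular grid is not total-threshold-colorable.) -/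
/-- For every integer threshold `t ≥ 0` there are no functions `v, u : {0,1,2} → ℤ` such that
the values of `v` are pairwise far apart (`|v i − v j| > t` for `i ≠ j`) while `|u i − v j| ≤ t`
for all `i ≠ j`. This shows the triangular-grid configuration is not threshold-colorable. -/
theorem stmt7 (t : ℤ) (ht : 0 ≤ t) :
    ¬ ∃ v u : Fin 3 → ℤ,
      (∀ i j : Fin 3, i ≠ j → t < |v i - v j|) ∧
      (∀ i j : Fin 3, i ≠ j → |u i - v j| ≤ t) := by
  rintro ⟨v, u, hf, hn⟩
  have f01 := hf 0 1 (by decide)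
  have f12 := hf 1 2 (by decide)
  have f02 := hf 0 2 (by decide)
  have n01 := abs_le.mp (hn 0 1 (by decide))
  have n02 := abs_le.mp (hn 0 2 (by decide))
  have n10 := abs_le.mp (hn 1 0 (by decide))
  have n12 := abs_le.mp (hn 1 2 (by decide))
  have n20 := abs_le.mp (hn 2 0 (by decide))
  have n21 := abs_le.mp (hn 2 1 (by decide))
  rcases abs_cases (v 0 - v 1) with ⟨e1, _⟩ | ⟨e1, _⟩ <;>
  rcases abs_cases (v 1 - v 2) with ⟨e2, _⟩ | ⟨e2, _⟩ <;>
  rcases abs_cases (v 0 - v 2) with ⟨e3, _⟩ | ⟨e3, _⟩ <;>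
  rw [e1] at f01 <;> rw [e2] at f12 <;> rw [e3] at f02 <;>
  linarith [n01.1, n01.2, n02.1, n02.2, n10.1, n10.2, n12.1, n12.2,
    n20.1, n20.2, n21.1, n21.2]
end

section
/- For every integer c₀ with 0 ≤ c₀ ≤ 7, all Booleans ℓ₁, ℓ₂, ℓ₃ (edge labels, true meaning near), and every k ∈ {1, 3, 4, 6}, there exist integers c₁, c₂ with 0 ≤ c₁ ≤ 7 and 0 ≤ c₂ ≤ 7 such that (|c₀ − c₁| ≤ 2 iff ℓ₁ = true), (|c₁ − c₂| ≤ 2 iff ℓ₂ = true), and (|c₂ − k| ≤ 2 iff ℓ₃ = true). (That is, on a path of length 3 with the color of one endpoint fixed to c₀, the colors 1, 3, 4 and 6 are all legal for the other endpoint, irrespective of the edge labels.) -/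
lemma aux12 (c₀ k : Fin 8) (hk : k = 1 ∨ k = 3 ∨ k = 4 ∨ k = 6) (ℓ₁ ℓ₂ ℓ₃ : Bool) :
    ∃ c₁ c₂ : Fin 8,
      (|(c₀ : ℤ) - (c₁ : ℤ)| ≤ 2 ↔ ℓ₁ = true) ∧
      (|(c₁ : ℤ) - (c₂ : ℤ)| ≤ 2 ↔ ℓ₂ = true) ∧
      (|(c₂ : ℤ) - (k : ℤ)| ≤ 2 ↔ ℓ₃ = true) := by
  revert hk; revert c₀ k ℓ₁ ℓ₂ ℓ₃; decide

/-- On a path `v₀v₁v₂v₃` of length 3 with `c(v₀) = c₀ ∈ {0,…,7}` and any edge labels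
(true = near, threshold 2), each of the colors `1, 3, 4, 6` is legal for `v₃`. -/
theorem stmt12 (c₀ : ℤ) (h0 : 0 ≤ c₀) (h7 : c₀ ≤ 7) (ℓ₁ ℓ₂ ℓ₃ : Bool)
    (k : ℤ) (hk : k = 1 ∨ k = 3 ∨ k = 4 ∨ k = 6) :
    ∃ c₁ c₂ : ℤ, 0 ≤ c₁ ∧ c₁ ≤ 7 ∧ 0 ≤ c₂ ∧ c₂ ≤ 7 ∧
      (|c₀ - c₁| ≤ 2 ↔ ℓ₁ = true) ∧
      (|c₁ - c₂| ≤ 2 ↔ ℓ₂ = true) ∧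
      (|c₂ - k| ≤ 2 ↔ ℓ₃ = true) := by
  lift c₀ to ℕ using h0 with n
  lift k to ℕ using (by omega : (0:ℤ) ≤ k) with m
  have hn : n < 8 := by exact_mod_cast (by omega : (n:ℤ) < 8)
  have hm : m < 8 := by
    rcases hk with h | h | h | h <;> omega
  have hm' : (⟨m, hm⟩ : Fin 8) = 1 ∨ (⟨m, hm⟩ : Fin 8) = 3 ∨
      (⟨m, hm⟩ : Fin 8) = 4 ∨ (⟨m, hm⟩ : Fin 8) = 6 := by
    rcases hk with h | h | h | h
    · left; apply Fin.ext; simpa using (by exact_mod_cast h : m = 1)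
    · right; left; apply Fin.ext; simpa using (by exact_mod_cast h : m = 3)
    · right; right; left; apply Fin.ext; simpa using (by exact_mod_cast h : m = 4)
    · right; right; right; apply Fin.ext; simpa using (by exact_mod_cast h : m = 6)
  obtain ⟨c₁, c₂, h1, h2, h3⟩ := aux12 ⟨n, hn⟩ ⟨m, hm⟩ hm' ℓ₁ ℓ₂ ℓ₃
  refine ⟨(c₁ : ℤ), (c₂ : ℤ), by positivity, ?_, by positivity, ?_, ?_, ?_, ?_⟩
  · exact_mod_cast (by omega : (c₁ : ℕ) ≤ 7)
  · exact_mod_cast (by omega : (c₂ : ℕ) ≤ 7)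
  · simpa using h1
  · simpa using h2
  · simpa using h3
end

section
/- Consider the tree T that is a subdivision of K_{1,3} with center w and three prongs of lengths 1, 2 and 3: a 1-prong w–u with leaf u, a 2-prong w–a₁–a₂ with leaf a₂, and a 3-prong w–b₁–b₂–b₃ with leaf b₃. For every assignment of Boolean labels (true meaning near) to the six edges of T, every color assignment to the leaves with c(u) ∈ {1, 6} and c(a₂), c(b₃) ∈ {0,...,7}, there exist colors c(w), c(a₁), c(b₁), c(b₂) ∈ {0,...,7} such that for every edge {x,y} of T: the label of {x,y} is true if and only if |c(x) − c(y)| ≤ 2. -/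
def near8 (x y : Fin 8) : Bool := decide (x.val ≤ y.val + 2 ∧ y.val ≤ x.val + 2)

set_option maxHeartbeats 4000000 in
theorem key : ∀ (l1 l2 l3 l4 l5 l6 b : Bool) (ca₂ cb₃ : Fin 8),
    ∃ cw : Fin 8, near8 cw (if b then 1 else 6) = l1 ∧
      (∃ ca₁ : Fin 8, near8 cw ca₁ = l2 ∧ near8 ca₁ ca₂ = l3) ∧
      (∃ cb₁ : Fin 8, near8 cw cb₁ = l4 ∧ ∃ cb₂ : Fin 8, near8 cb₁ cb₂ = l5 ∧ near8 cb₂ cb₃ = l6) := by decide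

theorem near8_iff (x y : Fin 8) : |((x.val : ℤ)) - (y.val : ℤ)| ≤ 2 ↔ near8 x y = true := by
  rw [abs_le]
  simp [near8]
  omega

/-- Reducibility of the subdivision `T` of `K_{1,3}` with center `w` and prongs of lengths
`1, 2, 3` (`w–u`, `w–a₁–a₂`, `w–b₁–b₂–b₃`): for every Boolean labeling of the six edges
(true = near, threshold 2) and every coloring of the leaves with `c(u) ∈ {1,6}` and
`c(a₂), c(b₃) ∈ {0,…,7}`, the coloring extends to all of `T`. -/
theorem stmt13 (ℓwu ℓwa₁ ℓa₁a₂ ℓwb₁ ℓb₁b₂ ℓb₂b₃ : Bool)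
    (cu ca₂ cb₃ : ℤ)
    (hcu : cu = 1 ∨ cu = 6)
    (hca₂ : 0 ≤ ca₂ ∧ ca₂ ≤ 7) (hcb₃ : 0 ≤ cb₃ ∧ cb₃ ≤ 7) :
    ∃ cw ca₁ cb₁ cb₂ : ℤ,
      (0 ≤ cw ∧ cw ≤ 7) ∧ (0 ≤ ca₁ ∧ ca₁ ≤ 7) ∧
      (0 ≤ cb₁ ∧ cb₁ ≤ 7) ∧ (0 ≤ cb₂ ∧ cb₂ ≤ 7) ∧
      (|cw - cu| ≤ 2 ↔ ℓwu = true) ∧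
      (|cw - ca₁| ≤ 2 ↔ ℓwa₁ = true) ∧
      (|ca₁ - ca₂| ≤ 2 ↔ ℓa₁a₂ = true) ∧
      (|cw - cb₁| ≤ 2 ↔ ℓwb₁ = true) ∧
      (|cb₁ - cb₂| ≤ 2 ↔ ℓb₁b₂ = true) ∧
      (|cb₂ - cb₃| ≤ 2 ↔ ℓb₂b₃ = true) := by
  set b : Bool := decide (cu = 1) with hb
  have hca₂' : (ca₂.toNat : ℤ) = ca₂ := by omega
  have hcb₃' : (cb₃.toNat : ℤ) = cb₃ := by omega
  obtain ⟨cw, h1, ⟨ca₁, h2, h3⟩, ⟨cb₁, h4, cb₂, h5, h6⟩⟩ :=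
    key ℓwu ℓwa₁ ℓa₁a₂ ℓwb₁ ℓb₁b₂ ℓb₂b₃ b ⟨ca₂.toNat, by omega⟩ ⟨cb₃.toNat, by omega⟩
  refine ⟨cw.val, ca₁.val, cb₁.val, cb₂.val, ⟨by omega, by omega⟩, ⟨by omega, by omega⟩,
    ⟨by omega, by omega⟩, ⟨by omega, by omega⟩, ?_, ?_, ?_, ?_, ?_, ?_⟩
  · have hcu' : cu = ((if b then 1 else 6 : Fin 8).val : ℤ) := by
      rcases hcu with h | h <;> simp_all <;> decide
    rw [hcu', near8_iff, h1]
  · rw [near8_iff cw ca₁, h2]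
  · have : ca₂ = (((⟨ca₂.toNat, by omega⟩ : Fin 8)).val : ℤ) := by simp [hca₂']
    rw [this, near8_iff, h3]
  · rw [near8_iff cw cb₁, h4]
  · rw [near8_iff cb₁ cb₂, h5]
  · have : cb₃ = (((⟨cb₃.toNat, by omega⟩ : Fin 8)).val : ℤ) := by simp [hcb₃']
    rw [this, near8_iff, h6]
end

section
/- Every path of length n ≥ 4 is a reducible configuration: for every n ≥ 4, all integers c₀, cₙ in {0,...,7} and all Booleans ℓ₁,...,ℓₙ (edge labels, true meaning near), there exist integers c₁,...,c_{n−1} in {0,...,7} such that for each i ∈ {1,...,n}: |c_{i−1} − c_i| ≤ 2 if and only if ℓ_i = true. -/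
def nearN (x y : ℕ) : Bool := (x - y ≤ 2) && (y - x ≤ 2)

def okB : Bool :=
  (List.range 8).all fun a => (List.range 8).all fun b =>
  [true, false].all fun l1 => [true, false].all fun l2 =>
  [true, false].all fun l3 => [true, false].all fun l4 =>
  (List.range 8).any fun x1 => (List.range 8).any fun x2 => (List.range 8).any fun x3 =>
    (nearN a x1 == l1) && (nearN x1 x2 == l2) && (nearN x2 x3 == l3) && (nearN x3 b == l4)

set_option maxHeartbeats 4000000 in
theorem ok_true : okB = true := by decide

lemma mem_tf (l : Bool) : l ∈ [true, false] := by cases l <;> simp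

lemma nearN_iff (x y : ℕ) (l : Bool) (hl : (nearN x y == l) = true) :
    (|(x : ℤ) - (y : ℤ)| ≤ 2 ↔ l = true) := by
  rw [beq_iff_eq] at hl
  cases l
  · simp only [nearN, Bool.and_eq_false_iff, decide_eq_false_iff_not] at hl
    simp only [abs_le]
    constructor
    · intro h; exfalso; omega
    · intro h; exact absurd h (by simp)
  · simp only [nearN, Bool.and_eq_true, decide_eq_true_eq] at hl
    simp only [abs_le, iff_true]
    omega

lemma four_step_int (a b : ℤ) (ha0 : 0 ≤ a) (ha7 : a ≤ 7) (hb0 : 0 ≤ b) (hb7 : b ≤ 7)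
    (l1 l2 l3 l4 : Bool) :
    ∃ x1 x2 x3 : ℤ, (0 ≤ x1 ∧ x1 ≤ 7) ∧ (0 ≤ x2 ∧ x2 ≤ 7) ∧ (0 ≤ x3 ∧ x3 ≤ 7) ∧
      (|a - x1| ≤ 2 ↔ l1 = true) ∧ (|x1 - x2| ≤ 2 ↔ l2 = true) ∧
      (|x2 - x3| ≤ 2 ↔ l3 = true) ∧ (|x3 - b| ≤ 2 ↔ l4 = true) := by
  have h := ok_true
  simp only [okB, List.all_eq_true, List.any_eq_true, List.mem_range] at h
  obtain ⟨x1, hx1, x2, hx2, x3, hx3, hc⟩ :=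
    h a.toNat (by omega) b.toNat (by omega) l1 (mem_tf l1) l2 (mem_tf l2)
      l3 (mem_tf l3) l4 (mem_tf l4)
  simp only [Bool.and_eq_true] at hc
  obtain ⟨⟨⟨h1, h2⟩, h3⟩, h4⟩ := hc
  have e1 := nearN_iff _ _ _ h1
  have e2 := nearN_iff _ _ _ h2
  have e3 := nearN_iff _ _ _ h3
  have e4 := nearN_iff _ _ _ h4
  rw [Int.toNat_of_nonneg ha0] at e1
  rw [Int.toNat_of_nonneg hb0] at e4
  exact ⟨x1, x2, x3, ⟨by positivity, by exact_mod_cast Int.ofNat_le.mpr (by omega)⟩,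
    ⟨by positivity, by exact_mod_cast Int.ofNat_le.mpr (by omega)⟩,
    ⟨by positivity, by exact_mod_cast Int.ofNat_le.mpr (by omega)⟩, e1, e2, e3, e4⟩

lemma one_step (a : ℤ) (ha0 : 0 ≤ a) (ha7 : a ≤ 7) (l : Bool) :
    ∃ a' : ℤ, 0 ≤ a' ∧ a' ≤ 7 ∧ (|a - a'| ≤ 2 ↔ l = true) := by
  cases l
  · refine ⟨if a ≤ 3 then a + 4 else a - 4, ?_, ?_, ?_⟩
    · split_ifs <;> omega
    · split_ifs <;> omega
    · simp only [abs_le]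
      constructor
      · intro h; exfalso; split_ifs at h <;> omega
      · intro h; exact absurd h (by simp)
  · exact ⟨a, ha0, ha7, by simp [abs_le]⟩

lemma key_s15 : ∀ m : ℕ, 4 ≤ m → ∀ (L : ℕ → Bool) (a b : ℤ), 0 ≤ a → a ≤ 7 → 0 ≤ b → b ≤ 7 →
    ∃ c : ℕ → ℤ, c 0 = a ∧ c m = b ∧ (∀ i, i ≤ m → 0 ≤ c i ∧ c i ≤ 7) ∧
      ∀ i, i < m → (|c i - c (i + 1)| ≤ 2 ↔ L i = true) := by
  intro m
  induction m with
  | zero => omega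
  | succ m ih =>
    intro hm L a b ha0 ha7 hb0 hb7
    by_cases hm4 : 4 ≤ m
    · obtain ⟨a', ha'0, ha'7, ha'⟩ := one_step a ha0 ha7 (L 0)
      obtain ⟨c', hc0, hcm, hcr, hce⟩ := ih hm4 (fun i => L (i + 1)) a' b ha'0 ha'7 hb0 hb7
      refine ⟨fun i => if i = 0 then a else c' (i - 1), by simp, by simp [hcm], ?_, ?_⟩
      · intro i hi
        cases i with
        | zero => exact ⟨ha0, ha7⟩
        | succ j => simpa using hcr j (by omega)
      · intro i hi
        cases i with
        | zero => simpa [hc0] using ha'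
        | succ j => simpa using hce j (by omega)
    · have hm3 : m = 3 := by omega
      subst hm3
      obtain ⟨x1, x2, x3, hr1, hr2, hr3, e1, e2, e3, e4⟩ :=
        four_step_int a b ha0 ha7 hb0 hb7 (L 0) (L 1) (L 2) (L 3)
      refine ⟨fun i => if i = 0 then a else if i = 1 then x1 else if i = 2 then x2
        else if i = 3 then x3 else b, by simp, by norm_num, ?_, ?_⟩
      · intro i hi
        interval_cases i <;> simp_all
      · intro i hi
        interval_cases i <;> simp_all

/-- Every path of length `n ≥ 4` is a reducible configuration: for any endpoint colors
`a, b ∈ {0,…,7}` and any edge labels `ℓ₁,…,ℓₙ` (true = near, threshold 2), there is a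
coloring `c` of all vertices of the path with colors in `{0,…,7}`, `c 0 = a`,
`c n = b`, realizing every edge label. -/
theorem stmt15 (n : ℕ) (hn : 4 ≤ n) (ℓ : Fin n → Bool)
    (a b : ℤ) (ha : 0 ≤ a ∧ a ≤ 7) (hb : 0 ≤ b ∧ b ≤ 7) :
    ∃ c : Fin (n + 1) → ℤ,
      c 0 = a ∧ c (Fin.last n) = b ∧
      (∀ i, 0 ≤ c i ∧ c i ≤ 7) ∧
      ∀ i : Fin n, (|c i.castSucc - c i.succ| ≤ 2 ↔ ℓ i = true) := by
  obtain ⟨c', hc0, hcn, hcr, hce⟩ :=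
    key_s15 n hn (fun i => if h : i < n then ℓ ⟨i, h⟩ else true) a b ha.1 ha.2 hb.1 hb.2
  refine ⟨fun i => c' i.val, ?_, ?_, ?_, ?_⟩
  · simpa using hc0
  · simpa [Fin.last] using hcn
  · intro i; exact hcr i.val (by omega)
  · intro i
    have := hce i.val i.isLt
    simpa [Fin.castSucc, Fin.succ, i.isLt] using this
end

section
/- Let T be the star with center v having one prong of length 1 and n prongs of length 3 (for any n ≥ 0). Then T is reducible: for every Boolean edge-labeling of T (true meaning near) and every assignment of colors in {0,...,7} to the leaves of T — namely a color a₀ for the leaf of the 1-prong and a color aᵢ for the leaf of the i-th 3-prong, for each i — there exist a color c(v) ∈ {0,...,7} and colors in {0,...,7} for the two internal vertices of each 3-prong such that every edge {x,y} of T labeled true satisfies |c(x) − c(y)| ≤ 2 and every edge labeled false satisfies |c(x) − c(y)| > 2. -/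
/-- Nearness predicate on `Fin 8`, as a Bool. -/
def N8 (u v : Fin 8) : Bool := decide (|(u : ℤ) - (v : ℤ)| ≤ 2)

lemma key0 : ∀ (a₀ : Fin 8) (l0 : Bool), ∃ cv : Fin 8,
    (cv = 1 ∨ cv = 4 ∨ cv = 6) ∧ N8 cv a₀ = l0 := by decide

lemma key1 : ∀ (cv a : Fin 8) (l1 l2 l3 : Bool),
    (cv = 1 ∨ cv = 4 ∨ cv = 6) →
    ∃ x y : Fin 8, N8 cv x = l1 ∧ N8 x y = l2 ∧ N8 y a = l3 := by decide

lemma N8_iff (u v : Fin 8) (b : Bool) (h : N8 u v = b) :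
    (|(u : ℤ) - (v : ℤ)| ≤ 2 ↔ b = true) := by
  subst h; unfold N8; cases hd : decide (|(u : ℤ) - (v : ℤ)| ≤ 2) <;>
    simp_all

lemma toFin8 (z : ℤ) (h : 0 ≤ z ∧ z ≤ 7) : ∃ u : Fin 8, (u : ℤ) = z := by
  refine ⟨⟨z.toNat, by omega⟩, ?_⟩
  simp [Int.toNat_of_nonneg h.1]

/-- The star with center `v`, one prong of length 1 (leaf colored `a₀`) and `n` prongs of
length 3 (the `i`-th with internal vertices `xᵢ, yᵢ`, leaf colored `a i`, and edge labels
`ℓ₁ i` on `v–xᵢ`, `ℓ₂ i` on `xᵢ–yᵢ`, `ℓ₃ i` on `yᵢ–leaf`; `ℓ₀` labels the 1-prong edge)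
is reducible (true = near, threshold 2, colors in `{0,…,7}`). -/
theorem stmt16 (n : ℕ) (ℓ₀ : Bool) (ℓ₁ ℓ₂ ℓ₃ : Fin n → Bool)
    (a₀ : ℤ) (ha₀ : 0 ≤ a₀ ∧ a₀ ≤ 7)
    (a : Fin n → ℤ) (ha : ∀ i, 0 ≤ a i ∧ a i ≤ 7) :
    ∃ (cv : ℤ) (x y : Fin n → ℤ),
      (0 ≤ cv ∧ cv ≤ 7) ∧
      (|cv - a₀| ≤ 2 ↔ ℓ₀ = true) ∧
      ∀ i : Fin n,
        (0 ≤ x i ∧ x i ≤ 7) ∧ (0 ≤ y i ∧ y i ≤ 7) ∧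
        (|cv - x i| ≤ 2 ↔ ℓ₁ i = true) ∧
        (|x i - y i| ≤ 2 ↔ ℓ₂ i = true) ∧
        (|y i - a i| ≤ 2 ↔ ℓ₃ i = true) := by
  obtain ⟨a₀', ha₀'⟩ := toFin8 a₀ ha₀
  obtain ⟨cv, hcv, hcv0⟩ := key0 a₀' ℓ₀
  have H : ∀ i : Fin n, ∃ x y : Fin 8,
      N8 cv x = ℓ₁ i ∧ N8 x y = ℓ₂ i ∧ (|((y : ℤ)) - a i| ≤ 2 ↔ ℓ₃ i = true) := by
    intro i
    obtain ⟨ai', hai'⟩ := toFin8 (a i) (ha i)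
    obtain ⟨x, y, hx, hy, hz⟩ := key1 cv ai' (ℓ₁ i) (ℓ₂ i) (ℓ₃ i) hcv
    exact ⟨x, y, hx, hy, by rw [← hai']; exact N8_iff _ _ _ hz⟩
  choose X Y h1 h2 h3 using H
  refine ⟨(cv : ℤ), fun i => ((X i) : ℤ), fun i => ((Y i) : ℤ), ?_, ?_, ?_⟩
  · have := cv.isLt; omega
  · rw [← ha₀']; exact N8_iff _ _ _ hcv0
  · intro i
    dsimp only
    refine ⟨⟨by positivity, ?_⟩, ⟨by positivity, ?_⟩, ?_, ?_, ?_⟩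
    · have := (X i).isLt; omega
    · have := (Y i).isLt; omega
    · exact N8_iff _ _ _ (h1 i)
    · exact N8_iff _ _ _ (h2 i)
    · exact h3 i
end
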